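/- arXiv:0806.2916 — 2 statements merged into one kernel-verified Lean document; each statement's English description precedes it below -/
import Mathlib

section
/- Let 0 < d < 1 and let {u_j : 1 ≤ j ≤ n} be an orthonormal basis of an n-dimensional complex inner-product space U. If v_1, …, v_n ∈ U satisfy ‖v_j − u_j‖ ≤ d for j = 1, …, n, then the dimension of the linear span of {v_1, …, v_n} is at least (1 − d²)n. -/
noncomputable section

open Module Submodule

local notation "⟪" x ", " y "⟫" => @inner ℂ _ _ x y

lemma parseval_aux {E : Type*} [NormedAddCommGroup E] [InnerProductSpace ℂ E]
    {ι : Type*} [Fintype ι] (b : OrthonormalBasis ι ℂ E) (x : E) :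
    ∑ i, ‖⟪b i, x⟫‖ ^ 2 = ‖x‖ ^ 2 := by
  have h1 : ‖x‖ = ‖b.repr x‖ := (b.repr.norm_map x).symm
  rw [h1, EuclideanSpace.norm_eq, Real.sq_sqrt (by positivity)]
  simp [b.repr_apply_apply]

/-- **Kolmogorov width consequence.** If `{u_j}` is an orthonormal basis of an `n`-dimensional
complex inner-product space and `‖v_j - u_j‖ ≤ d < 1`, then the span of the `v_j` has
dimension at least `(1 - d²)n`. -/
theorem span_dimension_lower_bound
    (n : ℕ) (d : ℝ) (hd0 : 0 < d) (hd1 : d < 1)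
    (U : Type*) [NormedAddCommGroup U] [InnerProductSpace ℂ U] [FiniteDimensional ℂ U]
    (u : OrthonormalBasis (Fin n) ℂ U)
    (v : Fin n → U) (hv : ∀ j, ‖v j - u j‖ ≤ d) :
    (1 - d ^ 2) * n ≤ (Module.finrank ℂ (Submodule.span ℂ (Set.range v)) : ℝ) := by
  set W : Submodule ℂ U := Submodule.span ℂ (Set.range v) with hW
  have hnU : finrank ℂ U = n := by
    simpa using finrank_eq_card_basis u.toBasis
  set m : ℕ := finrank ℂ Wᗮ with hm
  -- orthonormal basis of Wᗮ
  let w : OrthonormalBasis (Fin m) ℂ Wᗮ := stdOrthonormalBasis ℂ Wᗮ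
  -- Step 1: ‖Q (u j)‖ ≤ d where Q is projection onto Wᗮ
  have key1 : ∀ j, ‖(orthogonalProjection Wᗮ (u j) : U)‖ ≤ d := by
    intro j
    rw [← Submodule.starProjection_apply, Submodule.starProjection_orthogonal_val]
    have hmin := Submodule.starProjection_minimal (U := W) (u j)
    rw [hmin]
    have hvW : v j ∈ W := Submodule.subset_span (Set.mem_range_self j)
    calc ⨅ x : W, ‖u j - x‖ ≤ ‖u j - (⟨v j, hvW⟩ : W)‖ := by
          apply ciInf_le ⟨0, ?_⟩
          rintro r ⟨x, rfl⟩; positivity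
      _ ≤ d := by rw [norm_sub_rev]; exact hv j
  -- Step 2: ∑ j, ‖Q (u j)‖² = m
  have key2 : ∑ j, ‖(orthogonalProjection Wᗮ (u j) : U)‖ ^ 2 = (m : ℝ) := by
    have h1 : ∀ j, ‖(orthogonalProjection Wᗮ (u j) : U)‖ ^ 2
        = ∑ i, ‖⟪(w i : U), u j⟫‖ ^ 2 := by
      intro j
      have := parseval_aux w (orthogonalProjection Wᗮ (u j))
      simp_rw [Submodule.norm_coe, ← this, inner_orthogonalProjection_eq_of_mem_left]
    calc ∑ j, ‖(orthogonalProjection Wᗮ (u j) : U)‖ ^ 2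
        = ∑ j, ∑ i, ‖⟪(w i : U), u j⟫‖ ^ 2 := by simp_rw [h1]
      _ = ∑ i, ∑ j, ‖⟪u j, (w i : U)⟫‖ ^ 2 := by
          rw [Finset.sum_comm]
          simp_rw [norm_inner_symm]
      _ = ∑ i : Fin m, ‖(w i : U)‖ ^ 2 := by
          congr 1; funext i; exact parseval_aux u (w i)
      _ = (m : ℝ) := by
          simp [norm_coe (w _), w.orthonormal.1]
  -- Step 3: m ≤ d² n
  have hmd : (m : ℝ) ≤ d ^ 2 * n := by
    rw [← key2]
    calc ∑ j, ‖(orthogonalProjection Wᗮ (u j) : U)‖ ^ 2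
        ≤ ∑ _j : Fin n, d ^ 2 := by
          apply Finset.sum_le_sum
          intro j _
          have := key1 j
          nlinarith [norm_nonneg ((orthogonalProjection Wᗮ (u j) : U))]
      _ = d ^ 2 * n := by simp [mul_comm]
  -- Step 4 : conclude
  have hsum : finrank ℂ W + m = n := by
    rw [hm, Submodule.finrank_add_finrank_orthogonal, hnU]
  have : (finrank ℂ W : ℝ) = (n : ℝ) - (m : ℝ) := by
    have := congrArg (Nat.cast (R := ℝ)) hsum
    push_cast at this
    linarith
  rw [this]
  nlinarith [show (0:ℝ) ≤ (n:ℝ) from Nat.cast_nonneg n]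

end
end

section
/- Let δ > 0, r > 0, a ∈ ℝ, M > 0 and n ∈ ℕ. Let f_1, …, f_n : ℝ → ℂ be measurable with |f_j(x)| ≤ M for all x ∈ ℝ and all j, let λ_1, …, λ_n ∈ (a − r, a + r), let c_1, …, c_n ∈ ℂ, and let φ(x) = (sin(δx/2)/(δx/2))² (with φ(0) = 1). Then ∫_{|x−a| ≥ (1+δ)r} |Σ_{j=1}^n c_j f_j(x) φ(x − λ_j)|² dx ≤ (32 n M² / (3 δ⁷ r³)) · Σ_{j=1}^n |c_j|². -/
open MeasureTheory Filter Set Real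
open scoped ENNReal NNReal

noncomputable section

private lemma half_integral (δ c : ℝ) (hδ : 0 < δ) (hc : 0 < c) :
    ∫⁻ y in Ici c, ENNReal.ofReal (16 / (δ ^ 4 * y ^ 4)) =
      ENNReal.ofReal (16 / (3 * δ ^ 4 * c ^ 3)) := by
  have h4 : (-4 : ℝ) < -1 := by norm_num
  have hcongr : ∀ y ∈ Ioi c, 16 / δ ^ 4 * y ^ (-4 : ℝ) = 16 / (δ ^ 4 * y ^ 4) := by
    intro y hy
    have hy0 : 0 < y := hc.trans hy
    rw [show ((-4 : ℝ)) = -((4 : ℕ) : ℝ) by norm_num, Real.rpow_neg hy0.le,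
      Real.rpow_natCast]
    field_simp
  have hint : IntegrableOn (fun y : ℝ => 16 / (δ ^ 4 * y ^ 4)) (Ioi c) := by
    have h0 : IntegrableOn (fun y : ℝ => 16 / δ ^ 4 * y ^ (-4 : ℝ)) (Ioi c) :=
      (integrableOn_Ioi_rpow_of_lt h4 hc).const_mul (16 / δ ^ 4)
    exact h0.congr_fun (fun y hy => hcongr y hy) measurableSet_Ioi
  have hval : ∫ y in Ioi c, 16 / (δ ^ 4 * y ^ 4) = 16 / (3 * δ ^ 4 * c ^ 3) := by
    rw [← setIntegral_congr_fun measurableSet_Ioi (fun y hy => hcongr y hy)]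
    rw [MeasureTheory.integral_const_mul, integral_Ioi_rpow_of_lt h4 hc]
    rw [show ((-4 : ℝ) + 1) = -((3 : ℕ) : ℝ) by norm_num, Real.rpow_neg hc.le,
      Real.rpow_natCast]
    field_simp
    ring
  rw [← MeasureTheory.restrict_Ioi_eq_restrict_Ici,
    ← ofReal_integral_eq_lintegral_ofReal hint (ae_of_all _ fun y => by positivity), hval]

private lemma full_integral (δ c : ℝ) (hδ : 0 < δ) (hc : 0 < c) :
    ∫⁻ y in {y : ℝ | c ≤ |y|}, ENNReal.ofReal (16 / (δ ^ 4 * y ^ 4)) ≤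
      ENNReal.ofReal (32 / (3 * δ ^ 4 * c ^ 3)) := by
  have hset : {y : ℝ | c ≤ |y|} = Iic (-c) ∪ Ici c := by
    ext y
    simp [le_abs, le_neg, or_comm]
  have hneg : ∫⁻ y in Iic (-c), ENNReal.ofReal (16 / (δ ^ 4 * y ^ 4)) =
      ∫⁻ y in Ici c, ENNReal.ofReal (16 / (δ ^ 4 * y ^ 4)) := by
    have hmp : MeasurePreserving (fun y : ℝ => -y) volume volume :=
      Measure.measurePreserving_neg _
    have hemb : MeasurableEmbedding (fun y : ℝ => -y) :=
      (MeasurableEquiv.neg ℝ).measurableEmbedding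
    have key := hmp.setLIntegral_comp_preimage_emb hemb
      (fun y => ENNReal.ofReal (16 / (δ ^ 4 * y ^ 4))) (Ici c)
    have hpre : (fun y : ℝ => -y) ⁻¹' Ici c = Iic (-c) := by
      ext y; simp [le_neg]
    rw [hpre] at key
    rw [← key]
    refine lintegral_congr fun y => ?_
    rw [Even.neg_pow (⟨2, by norm_num⟩ : Even 4)]
  rw [hset]
  calc ∫⁻ y in Iic (-c) ∪ Ici c, ENNReal.ofReal (16 / (δ ^ 4 * y ^ 4)) ≤
      (∫⁻ y in Iic (-c), ENNReal.ofReal (16 / (δ ^ 4 * y ^ 4))) +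
        ∫⁻ y in Ici c, ENNReal.ofReal (16 / (δ ^ 4 * y ^ 4)) := lintegral_union_le _ _ _
    _ = ENNReal.ofReal (16 / (3 * δ ^ 4 * c ^ 3)) + ENNReal.ofReal (16 / (3 * δ ^ 4 * c ^ 3)) := by
        rw [hneg, half_integral δ c hδ hc]
    _ = ENNReal.ofReal (32 / (3 * δ ^ 4 * c ^ 3)) := by
        rw [← ENNReal.ofReal_add (by positivity) (by positivity)]
        congr 1
        ring
    _ ≤ _ := le_refl _

private lemma phi_sq_le (δ : ℝ) (hδ : 0 < δ) (φ : ℝ → ℝ)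
    (hφ : ∀ x : ℝ, φ x =
      if x = 0 then 1 else (Real.sin (δ * x / 2) / (δ * x / 2)) ^ 2)
    {y : ℝ} (hy : y ≠ 0) : φ y ^ 2 ≤ 16 / (δ ^ 4 * y ^ 4) := by
  rw [hφ, if_neg hy]
  have hypos : 0 < δ ^ 2 * y ^ 2 := by positivity
  have hb : (Real.sin (δ * y / 2) / (δ * y / 2)) ^ 2 ≤ 4 / (δ ^ 2 * y ^ 2) := by
    rw [div_pow, show (δ * y / 2) ^ 2 = δ ^ 2 * y ^ 2 / 4 by ring]
    calc Real.sin (δ * y / 2) ^ 2 / (δ ^ 2 * y ^ 2 / 4) ≤ 1 / (δ ^ 2 * y ^ 2 / 4) := by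
          gcongr
          exact Real.sin_sq_le_one _
      _ = 4 / (δ ^ 2 * y ^ 2) := one_div_div _ _
  calc ((Real.sin (δ * y / 2) / (δ * y / 2)) ^ 2) ^ 2 ≤ (4 / (δ ^ 2 * y ^ 2)) ^ 2 :=
        pow_le_pow_left₀ (sq_nonneg _) hb 2
    _ = 16 / (δ ^ 4 * y ^ 4) := by
        rw [div_pow]
        norm_num
        ring_nf

/-- **Tail estimate.** If `|f_j| ≤ M`, `λ_j ∈ (a-r, a+r)` and `φ` is the squared sinc function
with parameter `δ`, then
`∫_{|x-a| ≥ (1+δ)r} |∑ c_j f_j(x) φ(x-λ_j)|² dx ≤ (32nM²/(3δ⁷r³)) ∑ |c_j|²`. -/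
theorem tail_estimate
    (δ r a M : ℝ) (n : ℕ) (hδ : 0 < δ) (hr : 0 < r) (hM : 0 < M)
    (f : Fin n → ℝ → ℂ) (hfm : ∀ j, Measurable (f j)) (hfb : ∀ j x, ‖f j x‖ ≤ M)
    (lam : Fin n → ℝ) (hlam : ∀ j, lam j ∈ Set.Ioo (a - r) (a + r))
    (c : Fin n → ℂ)
    (φ : ℝ → ℝ)
    (hφ : ∀ x : ℝ, φ x =
      if x = 0 then 1 else (Real.sin (δ * x / 2) / (δ * x / 2)) ^ 2) :
    ∫⁻ x in {x : ℝ | (1 + δ) * r ≤ |x - a|},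
        (‖∑ j : Fin n, c j * f j x * ((φ (x - lam j) : ℝ) : ℂ)‖₊ : ℝ≥0∞) ^ 2 ≤
      ENNReal.ofReal (32 * n * M ^ 2 / (3 * δ ^ 7 * r ^ 3) * ∑ j : Fin n, ‖c j‖ ^ 2) := by
  set S : Set ℝ := {x : ℝ | (1 + δ) * r ≤ |x - a|} with hS
  set u : Fin n → ℝ → ℂ := fun j x => c j * f j x * ((φ (x - lam j) : ℝ) : ℂ) with hu
  -- measurability of φ
  have hφeq : φ = fun x => if x = 0 then 1 else (Real.sin (δ * x / 2) / (δ * x / 2)) ^ 2 :=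
    funext hφ
  have hφm : Measurable φ := by
    rw [hφeq]
    apply Measurable.ite (MeasurableSet.singleton 0) measurable_const
    have m1 : Measurable fun x : ℝ => δ * x / 2 :=
      ((measurable_id.const_mul δ).div_const 2)
    exact ((Real.measurable_sin.comp m1).div m1).pow_const 2
  have hum : ∀ j, Measurable fun x => (‖u j x‖₊ : ℝ≥0∞) ^ 2 := by
    intro j
    exact (((measurable_const.mul (hfm j)).mul
      (Complex.measurable_ofReal.comp (hφm.comp (measurable_id.sub measurable_const)))).nnnorm.coe_nnreal_ennreal).pow_const 2
  -- pointwise Cauchy–Schwarz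
  have hA : ∀ x, (‖∑ j : Fin n, u j x‖₊ : ℝ≥0∞) ^ 2 ≤
      (n : ℝ≥0∞) * ∑ j : Fin n, (‖u j x‖₊ : ℝ≥0∞) ^ 2 := by
    intro x
    have hre : ‖∑ j : Fin n, u j x‖ ^ 2 ≤ (n : ℝ) * ∑ j : Fin n, ‖u j x‖ ^ 2 := by
      calc ‖∑ j : Fin n, u j x‖ ^ 2 ≤ (∑ j : Fin n, ‖u j x‖) ^ 2 :=
            pow_le_pow_left₀ (norm_nonneg _) (norm_sum_le _ _) 2
        _ ≤ (Finset.univ.card : ℝ) * ∑ j : Fin n, ‖u j x‖ ^ 2 := sq_sum_le_card_mul_sum_sq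
        _ = (n : ℝ) * ∑ j : Fin n, ‖u j x‖ ^ 2 := by simp
    calc (‖∑ j : Fin n, u j x‖₊ : ℝ≥0∞) ^ 2 = ENNReal.ofReal (‖∑ j : Fin n, u j x‖ ^ 2) := by
          rw [ENNReal.ofReal_pow (norm_nonneg _), ofReal_norm, enorm_eq_nnnorm]
      _ ≤ ENNReal.ofReal ((n : ℝ) * ∑ j : Fin n, ‖u j x‖ ^ 2) := ENNReal.ofReal_le_ofReal hre
      _ = (n : ℝ≥0∞) * ∑ j : Fin n, (‖u j x‖₊ : ℝ≥0∞) ^ 2 := by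
          rw [ENNReal.ofReal_mul (by positivity), ENNReal.ofReal_natCast,
            ENNReal.ofReal_sum_of_nonneg (fun j _ => by positivity)]
          congr 1
          exact Finset.sum_congr rfl fun j _ => by
            rw [ENNReal.ofReal_pow (norm_nonneg _), ofReal_norm, enorm_eq_nnnorm]
  -- per-term integral bound
  have hCj : ∀ j, ∫⁻ x in S, (‖u j x‖₊ : ℝ≥0∞) ^ 2 ≤
      ENNReal.ofReal (‖c j‖ ^ 2 * M ^ 2) * ENNReal.ofReal (32 / (3 * δ ^ 7 * r ^ 3)) := by
    intro j
    have hsub : S ⊆ {x : ℝ | δ * r ≤ |x - lam j|} := by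
      intro x hx
      obtain ⟨h1, h2⟩ := hlam j
      simp only [hS, mem_setOf_eq] at hx ⊢
      have hl : |lam j - a| < r := abs_sub_lt_iff.2 ⟨by linarith, by linarith⟩
      have key := abs_sub_abs_le_abs_sub (x - a) (lam j - a)
      rw [show x - a - (lam j - a) = x - lam j by ring] at key
      nlinarith
    have hpt : ∀ x ∈ {x : ℝ | δ * r ≤ |x - lam j|}, (‖u j x‖₊ : ℝ≥0∞) ^ 2 ≤
        ENNReal.ofReal (‖c j‖ ^ 2 * M ^ 2) *
          ENNReal.ofReal (16 / (δ ^ 4 * (x - lam j) ^ 4)) := by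
      intro x hx
      simp only [mem_setOf_eq] at hx
      have hy0 : x - lam j ≠ 0 := by
        intro h
        rw [h, abs_zero] at hx
        nlinarith
      have hnorm : ‖u j x‖ ^ 2 ≤ ‖c j‖ ^ 2 * M ^ 2 * (16 / (δ ^ 4 * (x - lam j) ^ 4)) := by
        have h1 : ‖u j x‖ = ‖c j‖ * ‖f j x‖ * |φ (x - lam j)| := by
          simp [hu, norm_mul, Complex.norm_real, Real.norm_eq_abs]
        have hf2 : ‖f j x‖ ^ 2 ≤ M ^ 2 := pow_le_pow_left₀ (norm_nonneg _) (hfb j x) 2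
        have hp2 : (φ (x - lam j)) ^ 2 ≤ 16 / (δ ^ 4 * (x - lam j) ^ 4) :=
          phi_sq_le δ hδ φ hφ hy0
        calc ‖u j x‖ ^ 2 = ‖c j‖ ^ 2 * ‖f j x‖ ^ 2 * (φ (x - lam j)) ^ 2 := by
              rw [h1, mul_pow, mul_pow, sq_abs]
          _ ≤ ‖c j‖ ^ 2 * M ^ 2 * (16 / (δ ^ 4 * (x - lam j) ^ 4)) := by
              have h0 : (0:ℝ) ≤ (φ (x - lam j)) ^ 2 := sq_nonneg _
              gcongr
      calc (‖u j x‖₊ : ℝ≥0∞) ^ 2 = ENNReal.ofReal (‖u j x‖ ^ 2) := by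
            rw [ENNReal.ofReal_pow (norm_nonneg _), ofReal_norm, enorm_eq_nnnorm]
        _ ≤ ENNReal.ofReal (‖c j‖ ^ 2 * M ^ 2 * (16 / (δ ^ 4 * (x - lam j) ^ 4))) :=
            ENNReal.ofReal_le_ofReal hnorm
        _ = _ := ENNReal.ofReal_mul (by positivity)
    have hbm : Measurable fun x : ℝ =>
        ENNReal.ofReal (‖c j‖ ^ 2 * M ^ 2) *
          ENNReal.ofReal (16 / (δ ^ 4 * (x - lam j) ^ 4)) := by
      apply Measurable.const_mul
      apply ENNReal.measurable_ofReal.comp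
      apply Measurable.div measurable_const
      measurability
    have hsubst : ∫⁻ x in {x : ℝ | δ * r ≤ |x - lam j|},
        ENNReal.ofReal (16 / (δ ^ 4 * (x - lam j) ^ 4)) =
        ∫⁻ y in {y : ℝ | δ * r ≤ |y|}, ENNReal.ofReal (16 / (δ ^ 4 * y ^ 4)) := by
      have hmp : MeasurePreserving (fun x : ℝ => x + (-lam j)) volume volume :=
        measurePreserving_add_right _ _
      have hemb : MeasurableEmbedding (fun x : ℝ => x + (-lam j)) :=
        measurableEmbedding_addRight _
      have key := hmp.setLIntegral_comp_preimage_emb hemb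
        (fun y => ENNReal.ofReal (16 / (δ ^ 4 * y ^ 4))) {y : ℝ | δ * r ≤ |y|}
      have hpre : (fun x : ℝ => x + (-lam j)) ⁻¹' {y : ℝ | δ * r ≤ |y|} =
          {x : ℝ | δ * r ≤ |x - lam j|} := by
        ext x; simp [sub_eq_add_neg]
      rw [hpre] at key
      rw [← key]
      refine lintegral_congr fun x => ?_
      rw [sub_eq_add_neg]
    calc ∫⁻ x in S, (‖u j x‖₊ : ℝ≥0∞) ^ 2
        ≤ ∫⁻ x in {x : ℝ | δ * r ≤ |x - lam j|}, (‖u j x‖₊ : ℝ≥0∞) ^ 2 :=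
          lintegral_mono_set hsub
      _ ≤ ∫⁻ x in {x : ℝ | δ * r ≤ |x - lam j|},
            ENNReal.ofReal (‖c j‖ ^ 2 * M ^ 2) *
              ENNReal.ofReal (16 / (δ ^ 4 * (x - lam j) ^ 4)) :=
          setLIntegral_mono hbm hpt
      _ = ENNReal.ofReal (‖c j‖ ^ 2 * M ^ 2) * ∫⁻ x in {x : ℝ | δ * r ≤ |x - lam j|},
            ENNReal.ofReal (16 / (δ ^ 4 * (x - lam j) ^ 4)) :=
          lintegral_const_mul' _ _ ENNReal.ofReal_ne_top
      _ ≤ ENNReal.ofReal (‖c j‖ ^ 2 * M ^ 2) * ENNReal.ofReal (32 / (3 * δ ^ 7 * r ^ 3)) := by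
          gcongr
          rw [hsubst]
          have := full_integral δ (δ * r) hδ (by positivity)
          calc ∫⁻ y in {y : ℝ | δ * r ≤ |y|}, ENNReal.ofReal (16 / (δ ^ 4 * y ^ 4))
              ≤ ENNReal.ofReal (32 / (3 * δ ^ 4 * (δ * r) ^ 3)) := this
            _ = ENNReal.ofReal (32 / (3 * δ ^ 7 * r ^ 3)) := by
                congr 1
                ring_nf
  -- assemble
  calc ∫⁻ x in S, (‖∑ j : Fin n, u j x‖₊ : ℝ≥0∞) ^ 2
      ≤ ∫⁻ x in S, (n : ℝ≥0∞) * ∑ j : Fin n, (‖u j x‖₊ : ℝ≥0∞) ^ 2 :=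
        lintegral_mono fun x => hA x
    _ = (n : ℝ≥0∞) * ∑ j : Fin n, ∫⁻ x in S, (‖u j x‖₊ : ℝ≥0∞) ^ 2 := by
        rw [lintegral_const_mul' _ _ (by simp : (n : ℝ≥0∞) ≠ ⊤),
          lintegral_finset_sum _ fun j _ => hum j]
    _ ≤ (n : ℝ≥0∞) * ∑ j : Fin n,
          ENNReal.ofReal (‖c j‖ ^ 2 * M ^ 2) * ENNReal.ofReal (32 / (3 * δ ^ 7 * r ^ 3)) := by
        gcongr with j
        exact hCj j
    _ = ENNReal.ofReal (32 * n * M ^ 2 / (3 * δ ^ 7 * r ^ 3) * ∑ j : Fin n, ‖c j‖ ^ 2) := by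
        have h1 : ∀ j : Fin n, ENNReal.ofReal (‖c j‖ ^ 2 * M ^ 2) *
            ENNReal.ofReal (32 / (3 * δ ^ 7 * r ^ 3)) =
            ENNReal.ofReal (‖c j‖ ^ 2 * M ^ 2 * (32 / (3 * δ ^ 7 * r ^ 3))) :=
          fun j => (ENNReal.ofReal_mul (by positivity)).symm
        simp_rw [h1]
        rw [← ENNReal.ofReal_sum_of_nonneg (fun j _ => by positivity),
          ← ENNReal.ofReal_natCast n, ← ENNReal.ofReal_mul (by positivity)]
        congr 1
        rw [Finset.mul_sum, Finset.mul_sum]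
        exact Finset.sum_congr rfl fun j _ => by ring
end
end
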